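/- Let X be a compact Hausdorff space, Δ ⊆ X a clopen subset, γ : Δ → X continuous, and α : C(X) → C(X) the endomorphism α(a)(x) = a(γ(x)) for x ∈ Δ and α(a)(x) = 0 otherwise. Then (C(X), α) admits a complete transfer operator if and only if γ(Δ) is open in X and γ : Δ → γ(Δ) is a homeomorphism; in that case the complete transfer operator is L(a)(x) = a(γ⁻¹(x)) for x ∈ γ(Δ) and L(a)(x) = 0 for x ∉ γ(Δ). -/

import Mathlib

open ComplexOrder

open Classical in
/-- The continuous indicator function of the complement of a clopen set. -/
noncomputable def clopenIndicator {X : Type*} [TopologicalSpace X] (s : Set X)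
    (hs : IsClopen s) : C(X, ℂ) where
  toFun x := if x ∈ s then 0 else 1
  continuous_toFun := by
    refine Continuous.if ?_ continuous_const continuous_const
    intro a ha
    rw [show {x | x ∈ s} = s from rfl, hs.frontier_eq] at ha
    exact absurd ha (Set.notMem_empty a)

lemma clopenIndicator_of_mem {X : Type*} [TopologicalSpace X] {s : Set X}
    (hs : IsClopen s) {x : X} (hx : x ∈ s) : clopenIndicator s hs x = 0 := by
  simp [clopenIndicator, hx]

lemma clopenIndicator_of_not_mem {X : Type*} [TopologicalSpace X] {s : Set X}
    (hs : IsClopen s) {x : X} (hx : x ∉ s) : clopenIndicator s hs x = 1 := by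
  simp [clopenIndicator, hx]

/-- Real decomposition identity: `max a 0 - max (-a) 0 = a`. -/
lemma max_decomp (a : ℝ) : max a 0 - max (-a) 0 = a :=
  max_zero_sub_max_neg_zero_eq_self a

/-- For the endomorphism α of C(X) induced by a continuous map
γ : Δ → X on a clopen Δ ⊆ X, the system (C(X), α) admits a complete transfer
operator (i.e. α has unital kernel and hereditary range) iff γ(Δ) is open and
γ : Δ → γ(Δ) is a homeomorphism (equivalently, by compactness, injective);
in that case the complete transfer operator is L(a)(x) = a(γ⁻¹(x)) on γ(Δ)
and 0 elsewhere. -/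
theorem commutative_admits_complete_transfer_iff
    {X : Type*} [TopologicalSpace X] [CompactSpace X] [T2Space X] [Nonempty X]
    (Δ : Set X) (hΔ : IsClopen Δ) (γ : X → X) (hγ : ContinuousOn γ Δ)
    (α : C(X, ℂ) →⋆ₐ[ℂ] C(X, ℂ))
    (hα : ∀ (a : C(X, ℂ)) (x : X),
      (x ∈ Δ → α a x = a (γ x)) ∧ (x ∉ Δ → α a x = 0)) :
    -- the "admits a complete transfer operator" condition:
    (((∃ e : C(X, ℂ), α e = 0 ∧ ∀ k : C(X, ℂ), α k = 0 → e * k = k) ∧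
      (∀ a : C(X, ℂ), ∃ b : C(X, ℂ), α 1 * a * α 1 = α b)) ↔
      (IsOpen (γ '' Δ) ∧ Set.InjOn γ Δ)) ∧
    -- the formula for the complete transfer operator:
    (IsOpen (γ '' Δ) → Set.InjOn γ Δ →
      ∀ L : C(X, ℂ) →L[ℂ] C(X, ℂ),
        (∀ a : C(X, ℂ), (∀ x, 0 ≤ a x) → ∀ x, 0 ≤ L a x) →
        (∀ a b : C(X, ℂ), L (α a * b) = a * L b) →
        (∀ a : C(X, ℂ), α (L (α a)) = α a) →
        ∀ (a : C(X, ℂ)) (x : X),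
          (x ∈ γ '' Δ → L a x = a (Function.invFunOn γ Δ x)) ∧
          (x ∉ γ '' Δ → L a x = 0)) := by
  classical
  have hΔcpt : IsCompact Δ := hΔ.isClosed.isCompact
  have himgcpt : IsCompact (γ '' Δ) := hΔcpt.image_of_continuousOn hγ
  have himgcl : IsClosed (γ '' Δ) := himgcpt.isClosed
  -- basic facts about α 1
  have hα1mem : ∀ x ∈ Δ, α 1 x = 1 := by
    intro x hx
    rw [(hα 1 x).1 hx, ContinuousMap.one_apply]
  have hα1nmem : ∀ x ∉ Δ, α 1 x = 0 := fun x hx => (hα 1 x).2 hx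
  -- extension lemma: if γ is injective on Δ, every a factors through γ on Δ
  have extend : Set.InjOn γ Δ → ∀ a : C(X, ℂ), ∃ b : C(X, ℂ),
      ∀ d ∈ Δ, b (γ d) = a d := by
    intro hinj a
    haveI : CompactSpace Δ := isCompact_iff_compactSpace.mp hΔcpt
    let eqv : Δ ≃ (γ '' Δ) := Equiv.Set.imageOfInjOn γ Δ hinj
    have hcont : Continuous (eqv : Δ → (γ '' Δ)) :=
      hγ.mapsToRestrict (Set.mapsTo_image γ Δ)
    let homeo : Δ ≃ₜ (γ '' Δ) := hcont.homeoOfEquivCompactToT2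
    let f : C((γ '' Δ : Set X), ℂ) :=
      ⟨fun y => a ((homeo.symm y : Δ) : X),
        a.continuous.comp (continuous_subtype_val.comp homeo.symm.continuous)⟩
    obtain ⟨b, hb⟩ := f.exists_restrict_eq himgcl
    refine ⟨b, fun d hd => ?_⟩
    have h1 : b.restrict (γ '' Δ) ⟨γ d, Set.mem_image_of_mem γ hd⟩ =
        f ⟨γ d, Set.mem_image_of_mem γ hd⟩ := by rw [hb]
    have h2 : homeo ⟨d, hd⟩ = ⟨γ d, Set.mem_image_of_mem γ hd⟩ := rfl
    have h3 : homeo.symm ⟨γ d, Set.mem_image_of_mem γ hd⟩ = ⟨d, hd⟩ := by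
      rw [← h2, Homeomorph.symm_apply_apply]
    simpa [f, h3] using h1
  -- the continuous indicator e of the complement of γ '' Δ, when γ '' Δ is open
  have kernel_of_open : IsOpen (γ '' Δ) →
      ∃ e : C(X, ℂ), α e = 0 ∧ ∀ k : C(X, ℂ), α k = 0 → e * k = k := by
    intro hopen
    have hclopen : IsClopen (γ '' Δ) := ⟨himgcl, hopen⟩
    refine ⟨clopenIndicator _ hclopen, ?_, ?_⟩
    · ext x
      by_cases hx : x ∈ Δ
      · rw [(hα _ x).1 hx, clopenIndicator_of_mem hclopen (Set.mem_image_of_mem γ hx)]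
        rfl
      · rw [(hα _ x).2 hx]; rfl
    · intro k hk
      have hk0 : ∀ y ∈ γ '' Δ, k y = 0 := by
        rintro y ⟨d, hd, rfl⟩
        have := (hα k d).1 hd
        rw [hk] at this
        simpa using this.symm
      ext x
      by_cases hx : x ∈ γ '' Δ
      · simp [ContinuousMap.mul_apply, hk0 x hx]
      · simp [ContinuousMap.mul_apply, clopenIndicator_of_not_mem hclopen hx]
  have open_of_kernel :
      (∃ e : C(X, ℂ), α e = 0 ∧ ∀ k : C(X, ℂ), α k = 0 → e * k = k) →
      IsOpen (γ '' Δ) := by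
    rintro ⟨e, he0, hek⟩
    have hmem : ∀ x ∈ γ '' Δ, e x = 0 := by
      rintro x ⟨d, hd, rfl⟩
      have h := (hα e d).1 hd
      rw [he0] at h
      simpa using h.symm
    have hnmem : ∀ x ∉ γ '' Δ, e x = 1 := by
      intro x hx
      obtain ⟨f, hf0, hf1, -⟩ := exists_continuous_zero_one_of_isClosed himgcl
        isClosed_singleton (Set.disjoint_singleton_right.mpr hx)
      set k : C(X, ℂ) := ⟨fun y => (f y : ℂ),
        Complex.continuous_ofReal.comp f.continuous⟩ with hkdef
      have hαk : α k = 0 := by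
        ext y
        by_cases hy : y ∈ Δ
        · rw [(hα k y).1 hy]
          have : f (γ y) = 0 := hf0 (Set.mem_image_of_mem γ hy)
          simp [hkdef, this]
        · rw [(hα k y).2 hy]; rfl
      have := congrFun (congrArg DFunLike.coe (hek k hαk)) x
      have hkx : k x = 1 := by
        have : f x = 1 := hf1 rfl
        simp [hkdef, this]
      rw [ContinuousMap.mul_apply, hkx, mul_one] at this
      exact this
    have heq : γ '' Δ = (fun x => e x) ⁻¹' ({1}ᶜ) := by
      ext x
      constructor
      · intro hx
        simp only [Set.mem_preimage, Set.mem_compl_iff, Set.mem_singleton_iff, hmem x hx]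
        norm_num
      · intro hx
        by_contra hxn
        exact hx (by simp [hnmem x hxn])
    rw [heq]
    exact (isOpen_compl_singleton).preimage e.continuous
  have inj_of_hered :
      (∀ a : C(X, ℂ), ∃ b : C(X, ℂ), α 1 * a * α 1 = α b) → Set.InjOn γ Δ := by
    intro h x hx y hy hxy
    by_contra hne
    obtain ⟨f, hf0, hf1, -⟩ := exists_continuous_zero_one_of_isClosed
      (isClosed_singleton (x := x)) (isClosed_singleton (x := y))
      (by simp [Set.disjoint_singleton, hne])
    set a : C(X, ℂ) := ⟨fun z => (f z : ℂ),
      Complex.continuous_ofReal.comp f.continuous⟩ with hadef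
    obtain ⟨b, hb⟩ := h a
    have hbx := congrFun (congrArg DFunLike.coe hb) x
    have hby := congrFun (congrArg DFunLike.coe hb) y
    rw [ContinuousMap.mul_apply, ContinuousMap.mul_apply, hα1mem x hx,
      (hα b x).1 hx, one_mul, mul_one] at hbx
    rw [ContinuousMap.mul_apply, ContinuousMap.mul_apply, hα1mem y hy,
      (hα b y).1 hy, one_mul, mul_one] at hby
    have hax : a x = 0 := by simp [hadef, hf0 rfl]
    have hay : a y = 1 := by simp [hadef, hf1 rfl]
    rw [hax] at hbx
    rw [hay, ← hxy, ← hbx] at hby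
    exact one_ne_zero hby
  have hered_of_inj : Set.InjOn γ Δ →
      ∀ a : C(X, ℂ), ∃ b : C(X, ℂ), α 1 * a * α 1 = α b := by
    intro hinj a
    obtain ⟨b, hb⟩ := extend hinj a
    refine ⟨b, ?_⟩
    ext x
    by_cases hx : x ∈ Δ
    · rw [ContinuousMap.mul_apply, ContinuousMap.mul_apply, hα1mem x hx,
        (hα b x).1 hx, one_mul, mul_one, hb x hx]
    · rw [ContinuousMap.mul_apply, ContinuousMap.mul_apply, hα1nmem x hx,
        (hα b x).2 hx, mul_zero]
  refine ⟨⟨fun ⟨hker, hher⟩ => ⟨open_of_kernel hker, inj_of_hered hher⟩,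
    fun ⟨hopen, hinj⟩ => ⟨kernel_of_open hopen, hered_of_inj hinj⟩⟩, ?_⟩
  -- Part 2: uniqueness / formula for the complete transfer operator
  intro hopen hinj L hpos htrans hLinv a x
  have hclopen : IsClopen (γ '' Δ) := ⟨himgcl, hopen⟩
  set e : C(X, ℂ) := clopenIndicator _ hclopen with hedef
  have hαe : α e = 0 := by
    ext z
    by_cases hz : z ∈ Δ
    · rw [(hα _ z).1 hz, hedef, clopenIndicator_of_mem hclopen (Set.mem_image_of_mem γ hz)]
      rfl
    · rw [(hα _ z).2 hz]; rfl
  -- off γ '' Δ : L vanishes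
  have hoff : ∀ (c : C(X, ℂ)) (z : X), z ∉ γ '' Δ → L c z = 0 := by
    intro c z hz
    have h := htrans e c
    rw [hαe, zero_mul, map_zero] at h
    have h' := congrFun (congrArg DFunLike.coe h.symm) z
    rw [ContinuousMap.mul_apply, hedef, clopenIndicator_of_not_mem hclopen hz,
      one_mul] at h'
    simpa using h'
  -- L (α 1) = L 1
  have hL1 : L (α 1) = L 1 := by
    have := htrans 1 1
    rwa [mul_one, one_mul] at this
  -- key positivity lemma
  have zeroL : ∀ r : C(X, ℂ), (∀ y, 0 ≤ r y) → (∀ y ∈ Δ, r y = 0) →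
      ∀ y, L r y = 0 := by
    intro r hrpos hr0 y
    set s : C(X, ℂ) := (‖r‖ : ℂ) • (1 - α 1) - r with hsdef
    have hspos : ∀ z, 0 ≤ s z := by
      intro z
      by_cases hz : z ∈ Δ
      · have hval : s z = 0 := by
          simp only [hsdef, ContinuousMap.sub_apply, ContinuousMap.smul_apply,
            ContinuousMap.one_apply, smul_eq_mul]
          rw [hα1mem z hz, hr0 z hz]
          ring
        rw [hval]
      · have him : (r z).im = 0 := ((Complex.le_def).mp (hrpos z)).2.symm
        have hre : 0 ≤ (r z).re := by
          simpa using ((Complex.le_def).mp (hrpos z)).1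
        have hrele : (r z).re ≤ ‖r‖ := by
          calc (r z).re ≤ ‖r z‖ := Complex.re_le_norm _
            _ = ‖r z‖ := rfl
            _ ≤ ‖r‖ := r.norm_coe_le_norm z
        have hval : s z = (‖r‖ : ℂ) - r z := by
          simp only [hsdef, ContinuousMap.sub_apply, ContinuousMap.smul_apply,
            ContinuousMap.one_apply, smul_eq_mul]
          rw [hα1nmem z hz]
          ring
        rw [hval, Complex.le_def]
        constructor
        · simpa using hrele
        · simp [him]
    have hLs := hpos s hspos y
    have hLs' : L s = -(L r) := by
      rw [hsdef, map_sub, map_smul, map_sub, hL1, sub_self, smul_zero, zero_sub]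
    rw [hLs'] at hLs
    have h1 : L r y ≤ 0 := by
      have : (0 : ℂ) ≤ -(L r y) := by simpa using hLs
      exact neg_nonneg.mp this
    exact le_antisymm h1 (hpos r hrpos y)
  -- remove positivity requirement by decomposing into four nonneg parts
  have zeroL' : ∀ r : C(X, ℂ), (∀ y ∈ Δ, r y = 0) → ∀ y, L r y = 0 := by
    intro r hr0 y
    let r₁ : C(X, ℂ) := ⟨fun z => ((max (r z).re 0 : ℝ) : ℂ),
      Complex.continuous_ofReal.comp ((Complex.continuous_re.comp r.continuous).max
        continuous_const)⟩
    let r₂ : C(X, ℂ) := ⟨fun z => ((max (-(r z).re) 0 : ℝ) : ℂ),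
      Complex.continuous_ofReal.comp (((Complex.continuous_re.comp r.continuous).neg).max
        continuous_const)⟩
    let r₃ : C(X, ℂ) := ⟨fun z => ((max (r z).im 0 : ℝ) : ℂ),
      Complex.continuous_ofReal.comp ((Complex.continuous_im.comp r.continuous).max
        continuous_const)⟩
    let r₄ : C(X, ℂ) := ⟨fun z => ((max (-(r z).im) 0 : ℝ) : ℂ),
      Complex.continuous_ofReal.comp (((Complex.continuous_im.comp r.continuous).neg).max
        continuous_const)⟩
    have hpos₁ : ∀ z, 0 ≤ r₁ z := fun z => Complex.zero_le_real.mpr (le_max_right _ _)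
    have hpos₂ : ∀ z, 0 ≤ r₂ z := fun z => Complex.zero_le_real.mpr (le_max_right _ _)
    have hpos₃ : ∀ z, 0 ≤ r₃ z := fun z => Complex.zero_le_real.mpr (le_max_right _ _)
    have hpos₄ : ∀ z, 0 ≤ r₄ z := fun z => Complex.zero_le_real.mpr (le_max_right _ _)
    have hz₁ : ∀ z ∈ Δ, r₁ z = 0 := by intro z hz; simp [r₁, hr0 z hz]
    have hz₂ : ∀ z ∈ Δ, r₂ z = 0 := by intro z hz; simp [r₂, hr0 z hz]
    have hz₃ : ∀ z ∈ Δ, r₃ z = 0 := by intro z hz; simp [r₃, hr0 z hz]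
    have hz₄ : ∀ z ∈ Δ, r₄ z = 0 := by intro z hz; simp [r₄, hr0 z hz]
    have hdecomp : r = (r₁ - r₂) + Complex.I • (r₃ - r₄) := by
      ext z
      simp only [ContinuousMap.add_apply, ContinuousMap.sub_apply,
        ContinuousMap.smul_apply, smul_eq_mul, r₁, r₂, r₃, r₄, ContinuousMap.coe_mk]
      rw [← Complex.ofReal_sub, ← Complex.ofReal_sub, max_decomp, max_decomp,
        mul_comm]
      exact (Complex.re_add_im (r z)).symm
    rw [hdecomp, map_add, map_sub, map_smul, map_sub]
    simp only [ContinuousMap.add_apply, ContinuousMap.sub_apply,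
      ContinuousMap.smul_apply, smul_eq_mul]
    rw [zeroL r₁ hpos₁ hz₁ y, zeroL r₂ hpos₂ hz₂ y, zeroL r₃ hpos₃ hz₃ y,
      zeroL r₄ hpos₄ hz₄ y]
    ring
  constructor
  · rintro ⟨d, hd, rfl⟩
    -- L a (γ d) = a d
    obtain ⟨c, hc⟩ := extend hinj a
    have hLαc : L (α c) = c * L 1 := by
      have := htrans c 1
      rwa [mul_one] at this
    have hr0 : ∀ z ∈ Δ, (a - α c) z = 0 := by
      intro z hz
      rw [ContinuousMap.sub_apply, (hα c z).1 hz, hc z hz, sub_self]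
    have hsplit : L a = c * L 1 + L (a - α c) := by
      rw [← hLαc, ← map_add]
      congr 1
      ring
    have hL1x : (L 1) (γ d) = 1 := by
      have h := hLinv 1
      rw [hL1] at h
      have h' := congrFun (congrArg DFunLike.coe h) d
      rw [(hα (L 1) d).1 hd, (hα 1 d).1 hd, ContinuousMap.one_apply] at h'
      exact h'
    have hinv : Function.invFunOn γ Δ (γ d) = d := hinj.leftInvOn_invFunOn hd
    rw [hinv]
    have := congrFun (congrArg DFunLike.coe hsplit) (γ d)
    rw [ContinuousMap.add_apply, ContinuousMap.mul_apply, hL1x, mul_one,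
      zeroL' (a - α c) hr0 (γ d), add_zero, hc d hd] at this
    exact this
  · exact hoff a x
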